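/- Strict bound preservation of the implicit system scheme: let ψ be a saturation with saturation level α such that γ = inf_{s ∈ [0,α)} (α − s)/(α·ψ(s)) > 0. Suppose ρ^n, ρ^{n+1} satisfy the implicit system scheme relations with no-flux boundary conditions. If ρ_i^n > 0 entrywise and σ_i^n < α for all 1 ≤ i ≤ M, then ρ_i^{n+1} > 0 entrywise and σ_i^{n+1} < α for all 1 ≤ i ≤ M, with no restriction on Δt. -/
import Mathlib

set_option maxHeartbeats 1000000


lemma impl_core (M : ℕ) (f g h χ : ℕ → ℝ) (lam : ℝ) (hlam : 0 ≤ lam)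
    (hχ0 : χ 0 = 0) (hχM1 : χ (M+1) = 0)
    (hrel : ∀ i, i ≤ M → χ i * (g i - h i) = -(lam * (χ i * (f i - f (i-1)))))
    (hsign : ∀ i, i ≤ M → 0 ≤ (χ i - χ (i+1)) * f i) :
    ∑ i ∈ Finset.range (M+1), χ i * (g i - h i) ≤ 0 := by
  have hshift : ∑ i ∈ Finset.range (M+1), χ (i+1) * f i
      = ∑ i ∈ Finset.range (M+1), χ i * f (i-1) := by
    rw [Finset.sum_range_succ]
    rw [show ∑ i ∈ Finset.range (M+1), χ i * f (i-1)
        = (∑ i ∈ Finset.range M, χ (i+1) * f (i+1-1)) + χ 0 * f (0-1) from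
        Finset.sum_range_succ' _ M]
    simp [hχM1, hχ0]
  have key : 0 ≤ ∑ i ∈ Finset.range (M+1), χ i * (f i - f (i-1)) := by
    have e : ∑ i ∈ Finset.range (M+1), χ i * (f i - f (i-1))
        = ∑ i ∈ Finset.range (M+1), (χ i - χ (i+1)) * f i := by
      simp only [mul_sub, sub_mul, Finset.sum_sub_distrib, ← hshift]
    rw [e]
    exact Finset.sum_nonneg fun i hi => hsign i (by
      have := Finset.mem_range.mp hi; omega)
  calc ∑ i ∈ Finset.range (M+1), χ i * (g i - h i)
      = ∑ i ∈ Finset.range (M+1), -(lam * (χ i * (f i - f (i-1)))) :=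
        Finset.sum_congr rfl fun i hi => hrel i (by
          have := Finset.mem_range.mp hi; omega)
    _ = -(lam * ∑ i ∈ Finset.range (M+1), χ i * (f i - f (i-1))) := by
        rw [Finset.sum_neg_distrib, ← Finset.mul_sum]
    _ ≤ 0 := neg_nonpos.mpr (mul_nonneg hlam key)

/-- A *saturation* with saturation level `α > 0`: a continuous non-increasing function
`ψ : [0,∞) → ℝ` with `ψ α = 0` and `(α − s)·ψ s > 0` for every `s ≥ 0`, `s ≠ α`. -/
def IsSaturation (ψ : ℝ → ℝ) (α : ℝ) : Prop :=
  0 < α ∧ ContinuousOn ψ (Set.Ici 0) ∧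
    (∀ s₁ s₂, 0 ≤ s₁ → s₁ ≤ s₂ → ψ s₂ ≤ ψ s₁) ∧
    ψ α = 0 ∧ ∀ s, 0 ≤ s → s ≠ α → 0 < (α - s) * ψ s

/-- The CFL constant `γ = inf_{s ∈ [0,α)} (α − s)/(α·ψ s)`. -/
noncomputable def gammaCFL (ψ : ℝ → ℝ) (α : ℝ) : ℝ :=
  sInf ((fun s => (α - s) / (α * ψ s)) '' Set.Ico 0 α)

/-- Strict bound preservation of the implicit system scheme with no-flux boundary
conditions: `u i p` denotes `(u_{i+1/2})_p` and `F i p` denotes `(F_{i+1/2})_p`. -/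
theorem implicit_system_strict_bound_preservation
    (ψ : ℝ → ℝ) (α : ℝ) (hψ : IsSaturation ψ α)
    (hγ : 0 < gammaCFL ψ α)
    (Δx Δt : ℝ) (hΔx : 0 < Δx) (hΔt : 0 < Δt)
    (P M : ℕ) (hM : 1 ≤ M)
    (u ρn ρn1 F : ℕ → Fin P → ℝ)
    (hF0 : ∀ p, F 0 p = 0) (hFM : ∀ p, F M p = 0)
    (hFdef : ∀ i, 1 ≤ i → i + 1 ≤ M → ∀ p,
      F i p = ρn1 i p * max (ψ (∑ q, ρn1 (i + 1) q)) 0 * max (u i p) 0 +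
        ρn1 (i + 1) p * max (ψ (∑ q, ρn1 i q)) 0 * min (u i p) 0)
    (hscheme : ∀ i, 1 ≤ i → i ≤ M → ∀ p,
      ρn1 i p = ρn i p - Δt / Δx * (F i p - F (i - 1) p))
    (hρn : ∀ i, 1 ≤ i → i ≤ M → (∀ p, 0 < ρn i p) ∧ (∑ p, ρn i p) < α) :
    ∀ i, 1 ≤ i → i ≤ M → (∀ p, 0 < ρn1 i p) ∧ (∑ p, ρn1 i p) < α := by
  classical
  obtain ⟨hα, hcont, hmono, hψα, hsgn⟩ := hψ
  have hlam : 0 < Δt / Δx := div_pos hΔt hΔx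
  have hψle : ∀ s, α ≤ s → ψ s ≤ 0 := fun s hs => hψα ▸ hmono α s hα.le hs
  -- Step 1: nonnegativity of ρn1 on [1,M]
  have hnn : ∀ i, 1 ≤ i → i ≤ M → ∀ p, 0 ≤ ρn1 i p := by
    intro i₀ hi₀1 hi₀M p
    by_contra hneg
    push_neg at hneg
    set c : ℕ → Prop := fun j => 1 ≤ j ∧ j ≤ M ∧ ρn1 j p < 0 with hcdef
    set χ : ℕ → ℝ := fun j => if c j then 1 else 0 with hχdef
    have hχ1 : ∀ j, c j → χ j = 1 := fun j hj => by simp only [hχdef]; exact if_pos hj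
    have hχ0' : ∀ j, ¬ c j → χ j = 0 := fun j hj => by simp only [hχdef]; exact if_neg hj
    have hcore := impl_core M (fun j => -F j p) (fun j => -ρn1 j p) (fun j => -ρn j p)
      χ (Δt/Δx) hlam.le
      (hχ0' 0 (by simp [hcdef]))
      (hχ0' (M+1) (by simp [hcdef]))
      (by
        intro i hi
        by_cases hc : c i
        · have e := hscheme i hc.1 hc.2.1 p
          rw [hχ1 i hc]
          show (1:ℝ) * (-ρn1 i p - -ρn i p) = -(Δt / Δx * ((1:ℝ) * (-F i p - -F (i - 1) p)))
          linear_combination -e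
        · rw [hχ0' i hc]
          show (0:ℝ) * (-ρn1 i p - -ρn i p) = -(Δt / Δx * ((0:ℝ) * (-F i p - -F (i - 1) p)))
          ring)
      (by
        intro j hj
        by_cases h1 : c j
        · by_cases h2 : c (j+1)
          · rw [hχ1 j h1, hχ1 (j+1) h2]
            show (0:ℝ) ≤ (1 - 1) * -F j p; norm_num
          · rw [hχ1 j h1, hχ0' (j+1) h2]
            show (0:ℝ) ≤ (1 - 0) * -F j p
            have hFle : F j p ≤ 0 := by
              rcases eq_or_lt_of_le h1.2.1 with hEq | hLt
              · rw [hEq, hFM p]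
              · have hj1M : j + 1 ≤ M := hLt
                have hge : 0 ≤ ρn1 (j+1) p := by
                  by_contra hcn; push_neg at hcn
                  exact h2 ⟨by omega, hj1M, hcn⟩
                rw [hFdef j h1.1 hj1M p]
                have m1 : (0:ℝ) ≤ max (ψ (∑ q, ρn1 (j+1) q)) 0 := le_max_right _ _
                have m2 : (0:ℝ) ≤ max (u j p) 0 := le_max_right _ _
                have m3 : (0:ℝ) ≤ max (ψ (∑ q, ρn1 j q)) 0 := le_max_right _ _
                have m4 : min (u j p) 0 ≤ 0 := min_le_right _ _
                have hρ := h1.2.2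
                nlinarith [mul_nonneg m1 m2, mul_nonneg hge m3]
            linarith
        · by_cases h2 : c (j+1)
          · rw [hχ0' j h1, hχ1 (j+1) h2]
            show (0:ℝ) ≤ (0 - 1) * -F j p
            have hFge : 0 ≤ F j p := by
              rcases Nat.eq_zero_or_pos j with hEq | hPos
              · rw [hEq, hF0 p]
              · have hj1 : 1 ≤ j := hPos
                have hj1M : j + 1 ≤ M := h2.2.1
                have hge : 0 ≤ ρn1 j p := by
                  by_contra hcn; push_neg at hcn
                  exact h1 ⟨hj1, by omega, hcn⟩
                rw [hFdef j hj1 hj1M p]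
                have m1 : (0:ℝ) ≤ max (ψ (∑ q, ρn1 (j+1) q)) 0 := le_max_right _ _
                have m2 : (0:ℝ) ≤ max (u j p) 0 := le_max_right _ _
                have m3 : (0:ℝ) ≤ max (ψ (∑ q, ρn1 j q)) 0 := le_max_right _ _
                have m4 : min (u j p) 0 ≤ 0 := min_le_right _ _
                have hρ := h2.2.2
                nlinarith [mul_nonneg (mul_nonneg hge m1) m2, mul_nonneg m3 (neg_nonneg.mpr m4)]
            linarith
          · rw [hχ0' j h1, hχ0' (j+1) h2]
            show (0:ℝ) ≤ (0 - 0) * -F j p; norm_num)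
    have hpos_sum : 0 < ∑ i ∈ Finset.range (M+1),
        χ i * ((fun j => -ρn1 j p) i - (fun j => -ρn j p) i) := by
      apply Finset.sum_pos'
      · intro i _
        by_cases hc : c i
        · rw [hχ1 i hc]
          show (0:ℝ) ≤ 1 * (-ρn1 i p - -ρn i p)
          have := (hρn i hc.1 hc.2.1).1 p
          have := hc.2.2
          linarith
        · rw [hχ0' i hc]
          show (0:ℝ) ≤ 0 * (-ρn1 i p - -ρn i p)
          norm_num
      · refine ⟨i₀, Finset.mem_range.mpr (by omega), ?_⟩
        have hc : c i₀ := ⟨hi₀1, hi₀M, hneg⟩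
        rw [hχ1 i₀ hc]
        show (0:ℝ) < 1 * (-ρn1 i₀ p - -ρn i₀ p)
        have := (hρn i₀ hi₀1 hi₀M).1 p
        linarith
    linarith
  -- Step 2: σ bound
  have hσ : ∀ i, 1 ≤ i → i ≤ M → (∑ p, ρn1 i p) < α := by
    intro i₀ hi₀1 hi₀M
    by_contra hge
    push_neg at hge
    set c : ℕ → Prop := fun j => 1 ≤ j ∧ j ≤ M ∧ α ≤ ∑ q, ρn1 j q with hcdef
    set χ : ℕ → ℝ := fun j => if c j then 1 else 0 with hχdef
    have hχ1 : ∀ j, c j → χ j = 1 := fun j hj => by simp only [hχdef]; exact if_pos hj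
    have hχ0' : ∀ j, ¬ c j → χ j = 0 := fun j hj => by simp only [hχdef]; exact if_neg hj
    have hcore := impl_core M (fun j => ∑ p, F j p) (fun j => ∑ p, ρn1 j p)
      (fun j => ∑ p, ρn j p) χ (Δt/Δx) hlam.le
      (hχ0' 0 (by simp [hcdef]))
      (hχ0' (M+1) (by simp [hcdef]))
      (by
        intro i hi
        by_cases hc : c i
        · have e : (∑ p, ρn1 i p) = (∑ p, ρn i p)
              - Δt/Δx * ((∑ p, F i p) - (∑ p, F (i-1) p)) := by
            rw [show ∑ p, ρn1 i p = ∑ p, (ρn i p - Δt/Δx * (F i p - F (i-1) p)) from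
              Finset.sum_congr rfl fun p _ => hscheme i hc.1 hc.2.1 p]
            rw [Finset.sum_sub_distrib, ← Finset.mul_sum, Finset.sum_sub_distrib]
          rw [hχ1 i hc]
          show (1:ℝ) * ((∑ p, ρn1 i p) - ∑ p, ρn i p)
            = -(Δt / Δx * ((1:ℝ) * ((∑ p, F i p) - ∑ p, F (i-1) p)))
          linear_combination e
        · rw [hχ0' i hc]
          show (0:ℝ) * ((∑ p, ρn1 i p) - ∑ p, ρn i p)
            = -(Δt / Δx * ((0:ℝ) * ((∑ p, F i p) - ∑ p, F (i-1) p)))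
          ring)
      (by
        intro j hj
        by_cases h1 : c j
        · by_cases h2 : c (j+1)
          · rw [hχ1 j h1, hχ1 (j+1) h2]
            show (0:ℝ) ≤ (1 - 1) * ∑ p, F j p; norm_num
          · rw [hχ1 j h1, hχ0' (j+1) h2]
            show (0:ℝ) ≤ (1 - 0) * ∑ p, F j p
            have hGge : 0 ≤ ∑ p, F j p := by
              rcases eq_or_lt_of_le h1.2.1 with hEq | hLt
              · rw [hEq]; simp [hFM]
              · have hj1M : j + 1 ≤ M := hLt
                have hψ0 : max (ψ (∑ q, ρn1 j q)) 0 = 0 :=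
                  max_eq_right (hψle _ h1.2.2)
                apply Finset.sum_nonneg
                intro p _
                rw [hFdef j h1.1 hj1M p, hψ0]
                have hρ : 0 ≤ ρn1 j p := hnn j h1.1 h1.2.1 p
                have m1 : (0:ℝ) ≤ max (ψ (∑ q, ρn1 (j+1) q)) 0 := le_max_right _ _
                have m2 : (0:ℝ) ≤ max (u j p) 0 := le_max_right _ _
                nlinarith [mul_nonneg (mul_nonneg hρ m1) m2]
            linarith
        · by_cases h2 : c (j+1)
          · rw [hχ0' j h1, hχ1 (j+1) h2]
            show (0:ℝ) ≤ (0 - 1) * ∑ p, F j p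
            have hGle : (∑ p, F j p) ≤ 0 := by
              rcases Nat.eq_zero_or_pos j with hEq | hPos
              · rw [hEq]; simp [hF0]
              · have hj1 : 1 ≤ j := hPos
                have hj1M : j + 1 ≤ M := h2.2.1
                have hψ0 : max (ψ (∑ q, ρn1 (j+1) q)) 0 = 0 :=
                  max_eq_right (hψle _ h2.2.2)
                apply Finset.sum_nonpos
                intro p _
                rw [hFdef j hj1 hj1M p, hψ0]
                have hρ : 0 ≤ ρn1 (j+1) p := hnn (j+1) (by omega) hj1M p
                have m3 : (0:ℝ) ≤ max (ψ (∑ q, ρn1 j q)) 0 := le_max_right _ _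
                have m4 : min (u j p) 0 ≤ 0 := min_le_right _ _
                nlinarith [mul_nonneg hρ m3]
            linarith
          · rw [hχ0' j h1, hχ0' (j+1) h2]
            show (0:ℝ) ≤ (0 - 0) * ∑ p, F j p; norm_num)
    have hpos_sum : 0 < ∑ i ∈ Finset.range (M+1),
        χ i * ((fun j => ∑ p, ρn1 j p) i - (fun j => ∑ p, ρn j p) i) := by
      apply Finset.sum_pos'
      · intro i _
        by_cases hc : c i
        · rw [hχ1 i hc]
          show (0:ℝ) ≤ 1 * ((∑ p, ρn1 i p) - ∑ p, ρn i p)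
          have hlt := (hρn i hc.1 hc.2.1).2
          have := hc.2.2
          linarith
        · rw [hχ0' i hc]
          show (0:ℝ) ≤ 0 * ((∑ p, ρn1 i p) - ∑ p, ρn i p)
          norm_num
      · refine ⟨i₀, Finset.mem_range.mpr (by omega), ?_⟩
        have hc : c i₀ := ⟨hi₀1, hi₀M, hge⟩
        rw [hχ1 i₀ hc]
        show (0:ℝ) < 1 * ((∑ p, ρn1 i₀ p) - ∑ p, ρn i₀ p)
        have hlt := (hρn i₀ hi₀1 hi₀M).2
        linarith
    linarith
  -- Step 3: strict positivity
  have hFub : ∀ i, i ≤ M → ∀ p, ∃ a, 0 ≤ a ∧ F i p ≤ ρn1 i p * a := by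
    intro i hiM p
    rcases Nat.eq_zero_or_pos i with h0 | h1
    · exact ⟨0, le_refl 0, by rw [h0, hF0 p]; simp⟩
    · rcases eq_or_lt_of_le hiM with hEq | hLt
      · exact ⟨0, le_refl 0, by rw [hEq, hFM p]; simp⟩
      · have hi1M : i + 1 ≤ M := hLt
        refine ⟨max (ψ (∑ q, ρn1 (i+1) q)) 0 * max (u i p) 0,
          mul_nonneg (le_max_right _ _) (le_max_right _ _), ?_⟩
        rw [hFdef i h1 hi1M p]
        have hρ : 0 ≤ ρn1 (i+1) p := hnn (i+1) (by omega) hi1M p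
        have m3 : (0:ℝ) ≤ max (ψ (∑ q, ρn1 i q)) 0 := le_max_right _ _
        have m4 : min (u i p) 0 ≤ 0 := min_le_right _ _
        nlinarith [mul_nonneg hρ m3]
  have hFlb : ∀ i, i + 1 ≤ M → ∀ p, ∃ b, b ≤ 0 ∧ ρn1 (i+1) p * b ≤ F i p := by
    intro i hi1M p
    rcases Nat.eq_zero_or_pos i with h0 | h1
    · exact ⟨0, le_refl 0, by rw [h0, hF0 p]; simp⟩
    · refine ⟨max (ψ (∑ q, ρn1 i q)) 0 * min (u i p) 0, ?_, ?_⟩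
      · have m3 : (0:ℝ) ≤ max (ψ (∑ q, ρn1 i q)) 0 := le_max_right _ _
        have m4 : min (u i p) 0 ≤ 0 := min_le_right _ _
        nlinarith
      · rw [hFdef i h1 hi1M p]
        have hρ : 0 ≤ ρn1 i p := hnn i h1 (by omega) p
        have m1 : (0:ℝ) ≤ max (ψ (∑ q, ρn1 (i+1) q)) 0 := le_max_right _ _
        have m2 : (0:ℝ) ≤ max (u i p) 0 := le_max_right _ _
        nlinarith [mul_nonneg (mul_nonneg hρ m1) m2]
  have hpos : ∀ i, 1 ≤ i → i ≤ M → ∀ p, 0 < ρn1 i p := by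
    intro i hi1 hiM p
    obtain ⟨a, ha, hFa⟩ := hFub i hiM p
    obtain ⟨b, hb, hFb⟩ := hFlb (i-1) (by omega) p
    rw [show i - 1 + 1 = i from by omega] at hFb
    have e := hscheme i hi1 hiM p
    have hρ0 : 0 < ρn i p := (hρn i hi1 hiM).1 p
    have hx : 0 ≤ ρn1 i p := hnn i hi1 hiM p
    have hstep : ρn i p ≤ ρn1 i p * (1 + Δt/Δx * (a - b)) := by
      have d1 : F i p - F (i-1) p ≤ ρn1 i p * a - ρn1 i p * b := by linarith
      have d2 : Δt/Δx * (F i p - F (i-1) p) ≤ Δt/Δx * (ρn1 i p * a - ρn1 i p * b) :=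
        mul_le_mul_of_nonneg_left d1 hlam.le
      have expand : ρn1 i p * (1 + Δt/Δx * (a - b))
          = ρn1 i p + Δt/Δx * (ρn1 i p * a - ρn1 i p * b) := by ring
      linarith
    have hK : 0 < 1 + Δt/Δx * (a - b) := by
      have : 0 ≤ Δt/Δx * (a - b) := mul_nonneg hlam.le (by linarith)
      linarith
    have hmul : 0 < ρn1 i p * (1 + Δt/Δx * (a - b)) := lt_of_lt_of_le hρ0 hstep
    rcases mul_pos_iff.mp hmul with ⟨h, _⟩ | ⟨_, h⟩
    · exact h
    · linarith
  exact fun i hi1 hiM => ⟨hpos i hi1 hiM, hσ i hi1 hiM⟩
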